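/- With the hypotheses of the gluing lemma for line subsheaves: if (L, f) and (L', f') are two pairs consisting of a line bundle with an injective map into E such that each restricts over every U_i to (L_i, f_i) up to isomorphism, then there exists a unique O_Y-linear isomorphism φ : L' → L with f' = f ∘ φ. -/

import Mathlib

open TopologicalSpace

universe u v

variable (Y : Type u) [TopologicalSpace Y]

/-- A presheaf of commutative rings on a topological space, given concretely by its rings of
sections and restriction maps. -/
structure RingPresheaf where
  R : Opens Y → Type v
  ring : ∀ U, CommRing (R U)
  res : ∀ {U V : Opens Y}, V ≤ U → (R U →+* R V)
  res_id : ∀ (U : Opens Y) (x : R U), res le_rfl x = x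
  res_comp : ∀ {U V W : Opens Y} (hWV : W ≤ V) (hVU : V ≤ U) (x : R U),
    res hWV (res hVU x) = res (hWV.trans hVU) x

attribute [instance] RingPresheaf.ring

variable {Y}

/-- The sheaf condition for a presheaf of rings. -/
structure RingPresheaf.IsSheaf (𝒪 : RingPresheaf Y) : Prop where
  locality : ∀ (U : Opens Y) (𝒰 : Set (Opens Y)) (h𝒰 : ∀ V ∈ 𝒰, V ≤ U), U ≤ sSup 𝒰 →
    ∀ x y : 𝒪.R U, (∀ V (hV : V ∈ 𝒰), 𝒪.res (h𝒰 V hV) x = 𝒪.res (h𝒰 V hV) y) → x = y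
  gluing : ∀ (U : Opens Y) (𝒰 : Set (Opens Y)) (h𝒰 : ∀ V ∈ 𝒰, V ≤ U), U ≤ sSup 𝒰 →
    ∀ s : ∀ V ∈ 𝒰, 𝒪.R V,
      (∀ V hV W hW, 𝒪.res (inf_le_left : V ⊓ W ≤ V) (s V hV) =
        𝒪.res (inf_le_right : V ⊓ W ≤ W) (s W hW)) →
      ∃ x : 𝒪.R U, ∀ V hV, 𝒪.res (h𝒰 V hV) x = s V hV

/-- A sheaf of `𝒪`-modules on the open subset `U₀` of `Y`, given concretely by its modules of
sections over the open subsets of `U₀`, together with (semilinear) restriction maps, subject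
to the sheaf condition. -/
structure ModSheafOn (𝒪 : RingPresheaf Y) (U₀ : Opens Y) where
  M : ∀ V : Opens Y, V ≤ U₀ → Type v
  ab : ∀ V h, AddCommGroup (M V h)
  mod : ∀ V h, Module (𝒪.R V) (M V h)
  res : ∀ {U V : Opens Y} (hU : U ≤ U₀) (hVU : V ≤ U), M U hU →+ M V (hVU.trans hU)
  res_id : ∀ (V : Opens Y) (h : V ≤ U₀) (x : M V h), res h le_rfl x = x
  res_comp : ∀ {U V W : Opens Y} (hU : U ≤ U₀) (hVU : V ≤ U) (hWV : W ≤ V) (x : M U hU),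
    res (hVU.trans hU) hWV (res hU hVU x) = res hU (hWV.trans hVU) x
  res_smul : ∀ {U V : Opens Y} (hU : U ≤ U₀) (hVU : V ≤ U) (r : 𝒪.R U) (x : M U hU),
    res hU hVU (r • x) = 𝒪.res hVU r • res hU hVU x
  locality : ∀ (U : Opens Y) (hU : U ≤ U₀) (𝒰 : Set (Opens Y)) (h𝒰 : ∀ V ∈ 𝒰, V ≤ U),
    U ≤ sSup 𝒰 → ∀ x y : M U hU,
      (∀ V (hV : V ∈ 𝒰), res hU (h𝒰 V hV) x = res hU (h𝒰 V hV) y) → x = y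
  gluing : ∀ (U : Opens Y) (hU : U ≤ U₀) (𝒰 : Set (Opens Y)) (h𝒰 : ∀ V ∈ 𝒰, V ≤ U),
    U ≤ sSup 𝒰 → ∀ s : ∀ V (hV : V ∈ 𝒰), M V ((h𝒰 V hV).trans hU),
      (∀ V hV W hW, res ((h𝒰 V hV).trans hU) (inf_le_left : V ⊓ W ≤ V) (s V hV) =
        res ((h𝒰 W hW).trans hU) (inf_le_right : V ⊓ W ≤ W) (s W hW)) →
      ∃ x : M U hU, ∀ V hV, res hU (h𝒰 V hV) x = s V hV

attribute [instance] ModSheafOn.ab ModSheafOn.mod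

variable {𝒪 : RingPresheaf Y} {U₀ : Opens Y}

/-- A morphism, over the open subset `U₀`, from a sheaf of `𝒪`-modules on `U₀` to (the
restriction to `U₀` of) a sheaf of `𝒪`-modules on all of `Y`. -/
structure HomOn (L : ModSheafOn 𝒪 U₀) (E : ModSheafOn 𝒪 (⊤ : Opens Y)) where
  app : ∀ (V : Opens Y) (h : V ≤ U₀), L.M V h →ₗ[𝒪.R V] E.M V le_top
  naturality : ∀ {U V : Opens Y} (hU : U ≤ U₀) (hVU : V ≤ U) (x : L.M U hU),
    app V (hVU.trans hU) (L.res hU hVU x) = E.res le_top hVU (app U hU x)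

/-- An isomorphism, over the open subset `U₀`, from (the restriction to `U₀` of) a global
sheaf of `𝒪`-modules `L` to a sheaf of `𝒪`-modules `L'` on `U₀`. -/
structure IsoOn (L : ModSheafOn 𝒪 (⊤ : Opens Y)) (L' : ModSheafOn 𝒪 U₀) where
  app : ∀ (V : Opens Y) (h : V ≤ U₀), L.M V le_top ≃ₗ[𝒪.R V] L'.M V h
  naturality : ∀ {U V : Opens Y} (hU : U ≤ U₀) (hVU : V ≤ U) (x : L.M U le_top),
    app V (hVU.trans hU) (L.res le_top hVU x) = L'.res hU hVU (app U hU x)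

/-- A sheaf of `𝒪`-modules on `U₀` is a line bundle (invertible module) if it is locally
isomorphic to `𝒪`. -/
def IsLineBundleOn (L : ModSheafOn 𝒪 U₀) : Prop :=
  ∀ y : Y, y ∈ U₀ → ∃ (W : Opens Y) (hW : W ≤ U₀), y ∈ W ∧
    ∃ e : ∀ (V : Opens Y) (hV : V ≤ W), L.M V (hV.trans hW) ≃ₗ[𝒪.R V] 𝒪.R V,
      ∀ (U V : Opens Y) (hU : U ≤ W) (hVU : V ≤ U) (x : L.M U (hU.trans hW)),
        e V (hVU.trans hU) (L.res (hU.trans hW) hVU x) = 𝒪.res hVU (e U hU x)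

/-- A morphism of sheaves of modules is injective if it is injective on all sections. -/
def HomOn.Injective {L : ModSheafOn 𝒪 U₀} {E : ModSheafOn 𝒪 ⊤} (f : HomOn L E) : Prop :=
  ∀ (V : Opens Y) (h : V ≤ U₀), Function.Injective (f.app V h)

/-- Auxiliary extensionality lemma for `IsoOn`. -/
theorem IsoOn.ext' {L : ModSheafOn 𝒪 (⊤ : Opens Y)} {L' : ModSheafOn 𝒪 U₀}
    {a b : IsoOn L L'} (h : a.app = b.app) : a = b := by
  cases a; cases b; cases h; rfl

/-- Auxiliary lemma: a section of `B` can be transported to a section of `A` matching it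
inside `E`, provided both `A` and `B` restrict to the same `(L i, f i)` over a cover. -/
theorem exists_matching_section
    {ι : Type u} (U : ι → Opens Y) (hcov : iSup U = ⊤)
    (E : ModSheafOn 𝒪 (⊤ : Opens Y))
    (L : ∀ i, ModSheafOn 𝒪 (U i))
    (f : ∀ i, HomOn (L i) E)
    (A : ModSheafOn 𝒪 (⊤ : Opens Y)) (fA : HomOn A E) (hfA : fA.Injective)
    (hrA : ∀ i, ∃ h : IsoOn A (L i),
      ∀ (V : Opens Y) (hV : V ≤ U i) (x : A.M V le_top),
        fA.app V le_top x = (f i).app V hV (h.app V hV x))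
    (B : ModSheafOn 𝒪 (⊤ : Opens Y)) (fB : HomOn B E)
    (hrB : ∀ i, ∃ h : IsoOn B (L i),
      ∀ (V : Opens Y) (hV : V ≤ U i) (x : B.M V le_top),
        fB.app V le_top x = (f i).app V hV (h.app V hV x)) :
    ∀ (V : Opens Y) (x : B.M V le_top), ∃ y : A.M V le_top,
      fA.app V le_top y = fB.app V le_top x := by
  classical
  intro V x
  set 𝒰 : Set (Opens Y) := {W | W ≤ V ∧ ∃ i, W ≤ U i} with h𝒰def
  have h𝒰 : ∀ W ∈ 𝒰, W ≤ V := fun W hW => hW.1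
  have hVle : V ≤ sSup 𝒰 := by
    intro y hy
    have hy' : y ∈ iSup U := by rw [hcov]; trivial
    obtain ⟨i, hi⟩ := Opens.mem_iSup.mp hy'
    exact Opens.mem_sSup.mpr ⟨V ⊓ U i, ⟨inf_le_left, i, inf_le_right⟩, hy, hi⟩
  choose hA hAspec using hrA
  choose hB hBspec using hrB
  have hiW : ∀ W (hW : W ∈ 𝒰), W ≤ U hW.2.choose := fun W hW => hW.2.choose_spec
  set s : ∀ W (hW : W ∈ 𝒰), A.M W ((h𝒰 W hW).trans le_top) := fun W hW =>
    ((hA hW.2.choose).app W (hiW W hW)).symm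
      ((hB hW.2.choose).app W (hiW W hW) (B.res le_top (h𝒰 W hW) x)) with hsdef
  have hs : ∀ W (hW : W ∈ 𝒰),
      fA.app W le_top (s W hW) = fB.app W le_top (B.res le_top (h𝒰 W hW) x) := by
    intro W hW
    rw [hsdef]
    rw [hAspec hW.2.choose W (hiW W hW), LinearEquiv.apply_symm_apply,
      ← hBspec hW.2.choose W (hiW W hW)]
  have compat : ∀ W (hW : W ∈ 𝒰) W' (hW' : W' ∈ 𝒰),
      A.res ((h𝒰 W hW).trans le_top) (inf_le_left : W ⊓ W' ≤ W) (s W hW) =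
      A.res ((h𝒰 W' hW').trans le_top) (inf_le_right : W ⊓ W' ≤ W') (s W' hW') := by
    intro W hW W' hW'
    apply hfA (W ⊓ W') le_top
    rw [fA.naturality le_top (inf_le_left : W ⊓ W' ≤ W) (s W hW),
      fA.naturality le_top (inf_le_right : W ⊓ W' ≤ W') (s W' hW'),
      hs W hW, hs W' hW',
      ← fB.naturality le_top (inf_le_left : W ⊓ W' ≤ W),
      ← fB.naturality le_top (inf_le_right : W ⊓ W' ≤ W'),
      B.res_comp, B.res_comp]
  obtain ⟨y, hy⟩ := A.gluing V le_top 𝒰 h𝒰 hVle s compat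
  refine ⟨y, ?_⟩
  apply E.locality V le_top 𝒰 h𝒰 hVle
  intro W hW
  rw [← fA.naturality le_top (h𝒰 W hW) y, hy W hW, hs W hW,
    ← fB.naturality le_top (h𝒰 W hW) x]

/-- (Uniqueness in the gluing lemma for line subsheaves.)  With the hypotheses of the gluing
lemma (`Y` a space with a sheaf of rings `𝒪`, `E` a sheaf of `𝒪`-modules, `(U i)` an open
cover, and line bundles `L i` on `U i` with injective maps `f i : L i → E|_{U i}` agreeing on
overlaps up to multiplication by units): if `(Lg, fg)` and `(Lg', fg')` are two pairs, each
consisting of a line bundle on `Y` with an injective map into `E`, which both restrict over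
every `U i` to `(L i, f i)` up to isomorphism, then there exists a unique `𝒪`-linear
isomorphism `φ : Lg' → Lg` with `fg' = fg ∘ φ`. -/
theorem glue_line_subsheaves_unique
    {ι : Type u} (U : ι → Opens Y) (hcov : iSup U = ⊤)
    (h𝒪 : 𝒪.IsSheaf)
    (E : ModSheafOn 𝒪 (⊤ : Opens Y))
    (L : ∀ i, ModSheafOn 𝒪 (U i))
    (hL : ∀ i, IsLineBundleOn (L i))
    (f : ∀ i, HomOn (L i) E)
    (hf : ∀ i, (f i).Injective)
    (hglue : ∀ i j, ∃ (ψ : ∀ (V : Opens Y) (h : V ≤ U i ⊓ U j),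
        (L j).M V (h.trans inf_le_right) ≃ₗ[𝒪.R V] (L i).M V (h.trans inf_le_left))
      (_ : ∀ (V W : Opens Y) (hV : V ≤ U i ⊓ U j) (hWV : W ≤ V)
          (x : (L j).M V (hV.trans inf_le_right)),
          ψ W (hWV.trans hV) ((L j).res (hV.trans inf_le_right) hWV x) =
            (L i).res (hV.trans inf_le_left) hWV (ψ V hV x))
      (g : (𝒪.R (U i ⊓ U j))ˣ),
      ∀ (V : Opens Y) (h : V ≤ U i ⊓ U j) (x : (L j).M V (h.trans inf_le_right)),
        (f i).app V (h.trans inf_le_left) (ψ V h x) =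
          𝒪.res h (g : 𝒪.R (U i ⊓ U j)) • (f j).app V (h.trans inf_le_right) x)
    -- the two pairs `(Lg, fg)` and `(Lg', fg')`
    (Lg : ModSheafOn 𝒪 (⊤ : Opens Y)) (fg : HomOn Lg E)
    (hLg : IsLineBundleOn Lg) (hfg : fg.Injective)
    (hrest : ∀ i, ∃ h : IsoOn Lg (L i),
      ∀ (V : Opens Y) (hV : V ≤ U i) (x : Lg.M V le_top),
        fg.app V le_top x = (f i).app V hV (h.app V hV x))
    (Lg' : ModSheafOn 𝒪 (⊤ : Opens Y)) (fg' : HomOn Lg' E)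
    (hLg' : IsLineBundleOn Lg') (hfg' : fg'.Injective)
    (hrest' : ∀ i, ∃ h : IsoOn Lg' (L i),
      ∀ (V : Opens Y) (hV : V ≤ U i) (x : Lg'.M V le_top),
        fg'.app V le_top x = (f i).app V hV (h.app V hV x)) :
    ∃! φ : IsoOn Lg' Lg,
      ∀ (V : Opens Y) (x : Lg'.M V le_top),
        fg'.app V le_top x = fg.app V le_top (φ.app V le_top x) := by
  classical
  have key := exists_matching_section U hcov E L f Lg fg hfg hrest Lg' fg' hrest'
  have key' := exists_matching_section U hcov E L f Lg' fg' hfg' hrest' Lg fg hrest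
  -- the forward map and its defining property
  have hto : ∀ (V : Opens Y) (x : Lg'.M V le_top),
      fg.app V le_top (Classical.choose (key V x)) = fg'.app V le_top x :=
    fun V x => Classical.choose_spec (key V x)
  have hinv : ∀ (V : Opens Y) (x : Lg.M V le_top),
      fg'.app V le_top (Classical.choose (key' V x)) = fg.app V le_top x :=
    fun V x => Classical.choose_spec (key' V x)
  refine ⟨⟨fun V h =>
    { toFun := fun x => Classical.choose (key V x)
      invFun := fun x => Classical.choose (key' V x)
      map_add' := ?_
      map_smul' := ?_
      left_inv := ?_
      right_inv := ?_ }, ?_⟩, ?_, ?_⟩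
  · intro x y
    apply hfg V le_top
    rw [hto, map_add, map_add, hto, hto]
  · intro r x
    apply hfg V le_top
    rw [hto]
    show fg'.app V le_top (r • x) = fg.app V le_top (r • Classical.choose (key V x))
    rw [map_smul, map_smul, hto]
  · intro x
    apply hfg' V le_top
    rw [hinv, hto]
  · intro x
    apply hfg V le_top
    rw [hto, hinv]
  · -- naturality
    intro V W hV hWV x
    apply hfg W le_top
    show fg.app W le_top (Classical.choose (key W (Lg'.res le_top hWV x))) =
      fg.app W le_top (Lg.res le_top hWV (Classical.choose (key V x)))
    rw [hto]
    calc fg'.app W le_top (Lg'.res le_top hWV x)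
        = E.res le_top hWV (fg'.app V le_top x) := fg'.naturality le_top hWV x
      _ = E.res le_top hWV (fg.app V le_top (Classical.choose (key V x))) :=
          congrArg _ (hto V x).symm
      _ = fg.app W le_top (Lg.res le_top hWV (Classical.choose (key V x))) :=
          (fg.naturality le_top hWV _).symm
  · -- the defining property
    intro V x
    exact (hto V x).symm
  · -- uniqueness
    intro φ' hφ'
    apply IsoOn.ext'
    funext V h
    apply LinearEquiv.toLinearMap_injective
    apply LinearMap.ext
    intro x
    apply hfg V le_top
    show fg.app V le_top (φ'.app V h x) = fg.app V le_top (Classical.choose (key V x))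
    rw [hto, ← hφ' V x]
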